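/- Robust classification error bound for subspace attacks: Consider data (x, y) where y ∈ {±1} is uniform and x = y·θ* + σg with g ~ N(0, I_d), θ* ∈ ℝ^d, σ > 0. Let ŵ ∈ ℝ^d be a unit vector, U ∈ ℝ^{d×k} have orthonormal columns, and ε > 0. Define the attack set S_ε(x) = {x̃ : x̃ = x + UU^T δ for some δ ∈ ℝ^d, ‖x̃ − x‖∞ ≤ ε} and the robust classification error β = P(∃ x̃ ∈ S_ε(x) : sign(⟨ŵ, x̃⟩) ≠ y). If ⟨ŵ, θ*⟩ ≥ k·‖U‖_{∞,1}·‖ŵ^T U‖∞·ε, then β ≤ exp(−(⟨ŵ, θ*⟩ − k·‖U‖_{∞,1}·‖ŵ^T U‖∞·ε)² / (2σ²)). -/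

import Mathlib

open Matrix MeasureTheory ProbabilityTheory Real
open scoped ENNReal

section Aux

theorem my_integral_pi {n : ℕ} (m : Measure ℝ) [SigmaFinite m] (f : Fin n → ℝ → ℝ) :
    ∫ x : Fin n → ℝ, ∏ i, f i (x i) ∂(Measure.pi fun _ => m) = ∏ i, ∫ x, f i x ∂m := by
  induction n with
  | zero => simp [Measure.real, Measure.pi_univ]
  | succ n n_ih =>
      calc
        _ = ∫ x : ℝ × (Fin n → ℝ),
            f 0 x.1 * ∏ i : Fin n, f (Fin.succ i) (x.2 i) ∂((m).prod (Measure.pi fun _ => m)) := by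
          rw [← ((measurePreserving_piFinSuccAbove
            (fun _ : Fin (n+1) => m) 0).symm).integral_comp']
          simp_rw [MeasurableEquiv.piFinSuccAbove_symm_apply, Fin.insertNthEquiv,
            Fin.prod_univ_succ, Fin.insertNth_zero, Equiv.coe_fn_mk, Fin.cons_succ,
            Fin.cons_zero]
          congr 1
        _ = (∫ x, f 0 x ∂m) * ∏ i : Fin n, ∫ x : ℝ, f (Fin.succ i) x ∂m := by
          rw [← n_ih fun i => f (Fin.succ i), ← integral_prod_mul]
        _ = ∏ i, ∫ x, f i x ∂m := by rw [Fin.prod_univ_succ]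

theorem my_integrable_pi {n : ℕ} (m : Measure ℝ) [IsProbabilityMeasure m] {f : Fin n → ℝ → ℝ}
    (hf : ∀ i, Integrable (f i) m) :
    Integrable (fun x : Fin n → ℝ => ∏ i, f i (x i)) (Measure.pi fun _ => m) := by
  induction n with
  | zero =>
      simp only [Finset.univ_eq_empty, Finset.prod_empty]
      exact integrable_const _
  | succ n n_ih =>
      have := ((measurePreserving_piFinSuccAbove (fun _ : Fin (n+1) => m) 0).symm)
      rw [← this.integrable_comp_emb (MeasurableEquiv.measurableEmbedding _)]
      simp_rw [MeasurableEquiv.piFinSuccAbove_symm_apply, Fin.insertNthEquiv,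
        Fin.prod_univ_succ, Fin.insertNth_zero]
      simp only [Fin.zero_succAbove, Function.comp_def, Fin.cons_zero, Fin.cons_succ,
        Equiv.coe_fn_mk]
      have h2 : Integrable (fun (x : Fin n → ℝ) ↦ ∏ j, f (Fin.succ j) (x j))
          (Measure.pi fun _ => m) := n_ih (fun i ↦ hf _)
      exact Integrable.mul_prod (hf 0) h2

lemma pdf_mul_exp (c x : ℝ) :
    gaussianPDFReal 0 1 x * rexp (c * x) = rexp (c ^ 2 / 2) * gaussianPDFReal c 1 x := by
  simp only [gaussianPDFReal, NNReal.coe_one, mul_one, sub_zero]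
  rw [mul_comm (rexp (c ^ 2 / 2)), mul_assoc, mul_assoc, ← Real.exp_add, ← Real.exp_add]
  congr 1
  ring

lemma gaussian_density : gaussianReal 0 1 =
    volume.withDensity fun x => ((gaussianPDFReal 0 1 x).toNNReal : ℝ≥0∞) := by
  rw [gaussianReal_of_var_ne_zero _ one_ne_zero]
  rfl

lemma integrable_exp_mul_gauss (c : ℝ) :
    Integrable (fun x => rexp (c * x)) (gaussianReal 0 1) := by
  rw [gaussian_density, integrable_withDensity_iff]
  · have : (fun x => rexp (c * x) * ((gaussianPDFReal 0 1 x).toNNReal : ℝ≥0∞).toReal)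
        = fun x => rexp (c ^ 2 / 2) * gaussianPDFReal c 1 x := by
      ext x
      rw [ENNReal.coe_toReal, Real.coe_toNNReal _ (gaussianPDFReal_nonneg 0 1 x), mul_comm,
        pdf_mul_exp]
    rw [this]
    exact (integrable_gaussianPDFReal c 1).const_mul _
  · exact (measurable_gaussianPDFReal 0 1).real_toNNReal.coe_nnreal_ennreal
  · exact Filter.Eventually.of_forall fun x => ENNReal.coe_lt_top

lemma integral_exp_mul_gauss (c : ℝ) :
    ∫ x, rexp (c * x) ∂(gaussianReal 0 1) = rexp (c ^ 2 / 2) := by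
  rw [gaussian_density,
    integral_withDensity_eq_integral_smul (measurable_gaussianPDFReal 0 1).real_toNNReal]
  have : (fun x => (gaussianPDFReal 0 1 x).toNNReal • rexp (c * x))
      = fun x => rexp (c ^ 2 / 2) * gaussianPDFReal c 1 x := by
    ext x
    rw [NNReal.smul_def, smul_eq_mul, Real.coe_toNNReal _ (gaussianPDFReal_nonneg 0 1 x),
      pdf_mul_exp]
  rw [this, integral_const_mul, integral_gaussianPDFReal_eq_one c one_ne_zero, mul_one]

lemma gauss_tail {d : ℕ} (a : Fin d → ℝ) (ha : ∑ i, a i ^ 2 = 1) {t : ℝ} (ht : 0 ≤ t) :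
    ((Measure.pi fun _ : Fin d => gaussianReal 0 1)
      {g | t ≤ ∑ i, a i * g i}).toReal ≤ rexp (-t ^ 2 / 2) := by
  set ν := Measure.pi fun _ : Fin d => gaussianReal 0 1 with hν
  have hexp : ∀ g : Fin d → ℝ, rexp (t * ∑ i, a i * g i) = ∏ i, rexp (t * a i * g i) := by
    intro g
    rw [← Real.exp_sum, Finset.mul_sum]
    exact congrArg rexp (Finset.sum_congr rfl fun i _ => by ring)
  have h_int : Integrable (fun g : Fin d → ℝ => rexp (t * ∑ i, a i * g i)) ν := by
    simp_rw [hexp]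
    exact my_integrable_pi _ fun i => integrable_exp_mul_gauss (t * a i)
  have hch := measure_ge_le_exp_mul_mgf (Ω := Fin d → ℝ) (μ := ν)
    (X := fun g => ∑ i, a i * g i) t ht h_int
  have hmgf : mgf (fun g : Fin d → ℝ => ∑ i, a i * g i) ν t = rexp (t ^ 2 / 2) := by
    rw [mgf]
    simp_rw [hexp]
    rw [my_integral_pi _ fun i x => rexp (t * a i * x)]
    have h1 : ∀ i : Fin d, ∫ x, rexp (t * a i * x) ∂(gaussianReal 0 1)
        = rexp ((t * a i) ^ 2 / 2) := fun i => integral_exp_mul_gauss _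
    simp_rw [h1, ← Real.exp_sum]
    congr 1
    have : ∑ i, (t * a i) ^ 2 / 2 = (t ^ 2 * ∑ i, a i ^ 2) / 2 := by
      rw [Finset.mul_sum, ← Finset.sum_div]
      exact congrArg (· / 2) (Finset.sum_congr rfl fun i _ => by ring)
    rw [this, ha, mul_one]
  rw [hmgf] at hch
  calc (ν {g | t ≤ ∑ i, a i * g i}).toReal ≤ rexp (-t * t) * rexp (t ^ 2 / 2) := hch
    _ = rexp (-t ^ 2 / 2) := by rw [← Real.exp_add]; congr 1; ring

end Aux

/-- The `(∞,1)` operator norm `‖U‖_{∞,1} = sup { ‖Uᵀ v‖₁ : ‖v‖∞ ≤ 1 }`. -/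
noncomputable def opNormInfOne {d k : ℕ} (U : Matrix (Fin d) (Fin k) ℝ) : ℝ :=
  sSup {r : ℝ | ∃ v : Fin d → ℝ, ‖v‖ ≤ 1 ∧ r = ∑ j, |Uᵀ.mulVec v j|}

section Det

lemma opNorm_bddAbove {d k : ℕ} (U : Matrix (Fin d) (Fin k) ℝ) :
    BddAbove {r : ℝ | ∃ v : Fin d → ℝ, ‖v‖ ≤ 1 ∧ r = ∑ j, |Uᵀ.mulVec v j|} := by
  refine ⟨∑ j, ∑ i, |U i j|, fun r hr => ?_⟩
  obtain ⟨v, hv, rfl⟩ := hr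
  refine Finset.sum_le_sum fun j _ => ?_
  calc |Uᵀ.mulVec v j| = |∑ i, U i j * v i| := by
        simp [Matrix.mulVec, dotProduct, Matrix.transpose_apply]
    _ ≤ ∑ i, |U i j * v i| := Finset.abs_sum_le_sum_abs _ _
    _ ≤ ∑ i, |U i j| := by
        refine Finset.sum_le_sum fun i _ => ?_
        rw [abs_mul]
        calc |U i j| * |v i| ≤ |U i j| * 1 := by
              refine mul_le_mul_of_nonneg_left ?_ (abs_nonneg _)
              exact le_trans (le_trans (Real.norm_eq_abs (v i) ▸ norm_le_pi_norm v i) hv) le_rfl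
          _ = |U i j| := mul_one _

lemma opNorm_mem_le {d k : ℕ} (U : Matrix (Fin d) (Fin k) ℝ) (v : Fin d → ℝ) (hv : ‖v‖ ≤ 1) :
    ∑ j, |Uᵀ.mulVec v j| ≤ opNormInfOne U :=
  le_csSup (opNorm_bddAbove U) ⟨v, hv, rfl⟩

lemma opNorm_nonneg {d k : ℕ} (U : Matrix (Fin d) (Fin k) ℝ) : 0 ≤ opNormInfOne U := by
  have := opNorm_mem_le U 0 (by simp)
  simpa using le_trans (by positivity) this

lemma det_bound {d k : ℕ} (U : Matrix (Fin d) (Fin k) ℝ) (hU : Uᵀ * U = 1)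
    (w : Fin d → ℝ) (δ p : Fin d → ℝ) (hp : p = U.mulVec (Uᵀ.mulVec δ))
    (ε : ℝ) (hε : 0 < ε) (hpε : ‖p‖ ≤ ε) :
    |∑ i, w i * p i| ≤ (k : ℝ) * opNormInfOne U * ‖Uᵀ.mulVec w‖ * ε := by
  have hq : Uᵀ.mulVec p = Uᵀ.mulVec δ := by
    rw [hp, Matrix.mulVec_mulVec, hU, Matrix.one_mulVec]
  have hsum : ∑ i, w i * p i = ∑ j, Uᵀ.mulVec w j * Uᵀ.mulVec p j := by
    have h0 : ∑ i, w i * p i = w ⬝ᵥ p := rfl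
    rw [hq, h0, hp, Matrix.dotProduct_mulVec, ← Matrix.mulVec_transpose]
    rfl
  have hl1 : ∑ j, |Uᵀ.mulVec p j| ≤ opNormInfOne U * ε := by
    have hv : ‖ε⁻¹ • p‖ ≤ 1 := by
      rw [norm_smul, norm_inv, Real.norm_eq_abs, abs_of_pos hε]
      rw [inv_mul_le_iff₀ hε, mul_one]
      exact hpε
    have h2 := opNorm_mem_le U (ε⁻¹ • p) hv
    have h3 : ∀ j, |Uᵀ.mulVec (ε⁻¹ • p) j| = ε⁻¹ * |Uᵀ.mulVec p j| := by
      intro j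
      rw [Matrix.mulVec_smul]
      simp [abs_mul, abs_of_pos (inv_pos.mpr hε)]
    rw [Finset.sum_congr rfl fun j _ => h3 j, ← Finset.mul_sum] at h2
    calc ∑ j, |Uᵀ.mulVec p j| = ε * (ε⁻¹ * ∑ j, |Uᵀ.mulVec p j|) := by
          field_simp
      _ ≤ ε * opNormInfOne U := mul_le_mul_of_nonneg_left h2 hε.le
      _ = opNormInfOne U * ε := mul_comm _ _
  have hmain : |∑ i, w i * p i| ≤ ‖Uᵀ.mulVec w‖ * (opNormInfOne U * ε) := by
    rw [hsum]
    calc |∑ j, Uᵀ.mulVec w j * Uᵀ.mulVec p j| ≤ ∑ j, |Uᵀ.mulVec w j * Uᵀ.mulVec p j| :=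
          Finset.abs_sum_le_sum_abs _ _
      _ ≤ ∑ j, ‖Uᵀ.mulVec w‖ * |Uᵀ.mulVec p j| := by
          refine Finset.sum_le_sum fun j _ => ?_
          rw [abs_mul]
          exact mul_le_mul_of_nonneg_right
            (Real.norm_eq_abs (Uᵀ.mulVec w j) ▸ norm_le_pi_norm (Uᵀ.mulVec w) j) (abs_nonneg _)
      _ = ‖Uᵀ.mulVec w‖ * ∑ j, |Uᵀ.mulVec p j| := by rw [Finset.mul_sum]
      _ ≤ ‖Uᵀ.mulVec w‖ * (opNormInfOne U * ε) :=
          mul_le_mul_of_nonneg_left hl1 (norm_nonneg _)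
  rcases Nat.eq_zero_or_pos k with hk | hk
  · subst hk
    have h0 : ∑ i, w i * p i = ∑ j : Fin 0, Uᵀ.mulVec w j * Uᵀ.mulVec p j := hsum
    rw [h0]
    simp
  · refine hmain.trans ?_
    have h1k : (1 : ℝ) ≤ (k : ℝ) := by exact_mod_cast hk
    calc ‖Uᵀ.mulVec w‖ * (opNormInfOne U * ε)
        ≤ (k : ℝ) * (‖Uᵀ.mulVec w‖ * (opNormInfOne U * ε)) := by
          nlinarith [norm_nonneg (Uᵀ.mulVec w), opNorm_nonneg U, hε.le,
            mul_nonneg (norm_nonneg (Uᵀ.mulVec w)) (mul_nonneg (opNorm_nonneg U) hε.le)]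
      _ = (k : ℝ) * opNormInfOne U * ‖Uᵀ.mulVec w‖ * ε := by ring

end Det

set_option maxHeartbeats 1000000 in
/-- Robust classification error bound for subspace attacks: `y` uniform on `{±1}`,
`x = y·θ* + σg` with `g ~ N(0, I_d)`, `ŵ` a unit vector, `U` with orthonormal
columns.  If the margin condition holds, the robust error is at most the stated
Gaussian tail. -/
theorem robust_error_subspace_attack {d k : ℕ} {Ω : Type*} [MeasurableSpace Ω]
    (P : Measure Ω) [IsProbabilityMeasure P]
    (Y : Ω → ℝ) (G : Ω → Fin d → ℝ)
    (hlaw : Measure.map (fun ω => (Y ω, G ω)) P =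
      ((1/2 : ℝ≥0∞) • Measure.dirac (1 : ℝ) +
        (1/2 : ℝ≥0∞) • Measure.dirac (-1 : ℝ)).prod
        (Measure.pi (fun _ : Fin d => gaussianReal 0 1)))
    (θ : Fin d → ℝ) (σ : ℝ) (hσ : 0 < σ)
    (w : Fin d → ℝ) (hw : ∑ i, w i ^ 2 = 1)
    (U : Matrix (Fin d) (Fin k) ℝ) (hU : Uᵀ * U = 1)
    (ε : ℝ) (hε : 0 < ε)
    (hmargin : (k : ℝ) * opNormInfOne U * ‖Uᵀ.mulVec w‖ * ε ≤ ∑ i, w i * θ i) :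
    (P {ω | ∃ xt : Fin d → ℝ,
        (∃ δ : Fin d → ℝ,
          xt = (fun i => Y ω * θ i + σ * G ω i) + U.mulVec (Uᵀ.mulVec δ)) ∧
        ‖xt - (fun i => Y ω * θ i + σ * G ω i)‖ ≤ ε ∧
        Y ω * ∑ i, w i * xt i ≤ 0}).toReal ≤
      Real.exp (-((∑ i, w i * θ i) -
        (k : ℝ) * opNormInfOne U * ‖Uᵀ.mulVec w‖ * ε) ^ 2 / (2 * σ ^ 2)) := by
  set mar : ℝ := ∑ i, w i * θ i with hmar
  set M : ℝ := (k : ℝ) * opNormInfOne U * ‖Uᵀ.mulVec w‖ * ε with hMdef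
  set t : ℝ := (mar - M) / σ with htdef
  have ht : 0 ≤ t := div_nonneg (sub_nonneg.mpr hmargin) hσ.le
  set μY : Measure ℝ := (1/2 : ℝ≥0∞) • Measure.dirac (1 : ℝ) +
      (1/2 : ℝ≥0∞) • Measure.dirac (-1 : ℝ) with hμY
  set νG : Measure (Fin d → ℝ) := Measure.pi (fun _ : Fin d => gaussianReal 0 1) with hνG
  haveI : IsProbabilityMeasure νG := by rw [hνG]; infer_instance
  -- the pair map is a.e.-measurable
  have hprod_univ : (μY.prod νG) Set.univ = 1 := by
    rw [← Set.univ_prod_univ, Measure.prod_prod]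
    have h1 : μY Set.univ = 1 := by
      rw [hμY]
      simp [Measure.dirac_apply]
      exact ENNReal.inv_two_add_inv_two
    rw [h1, measure_univ, one_mul]
  have hmp : AEMeasurable (fun ω => (Y ω, G ω)) P := by
    by_contra h
    rw [Measure.map_of_not_aemeasurable h] at hlaw
    have := hprod_univ
    rw [← hlaw] at this
    simp at this
  -- decomposition of the product measure on measurable sets
  have hprod_apply : ∀ s : Set (ℝ × (Fin d → ℝ)), MeasurableSet s →
      (μY.prod νG) s = 1/2 * νG (Prod.mk (1:ℝ) ⁻¹' s) + 1/2 * νG (Prod.mk (-1:ℝ) ⁻¹' s) := by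
    intro s hs
    rw [Measure.prod_apply hs, hμY, lintegral_add_measure, lintegral_smul_measure,
      lintegral_smul_measure, lintegral_dirac, lintegral_dirac]
    simp only [smul_eq_mul]
  -- the two target sets
  set S : Set (ℝ × (Fin d → ℝ)) := {p | p.1 * ∑ i, w i * p.2 i ≤ -t} with hSdef
  have hSmeas : MeasurableSet S := by
    have hm : Measurable fun p : ℝ × (Fin d → ℝ) => p.1 * ∑ i, w i * p.2 i :=
      measurable_fst.mul (Finset.measurable_sum _ fun i _ =>
        measurable_const.mul ((measurable_pi_apply i).comp measurable_snd))
    exact measurableSet_le hm measurable_const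
  set T : Set (ℝ × (Fin d → ℝ)) := Prod.fst ⁻¹' (({1, -1} : Set ℝ)ᶜ) with hTdef
  have hTmeas : MeasurableSet T :=
    measurable_fst (((measurableSet_singleton (1:ℝ)).union
      (measurableSet_singleton (-1:ℝ))).compl)
  -- event inclusion
  have hincl : {ω | ∃ xt : Fin d → ℝ,
        (∃ δ : Fin d → ℝ,
          xt = (fun i => Y ω * θ i + σ * G ω i) + U.mulVec (Uᵀ.mulVec δ)) ∧
        ‖xt - (fun i => Y ω * θ i + σ * G ω i)‖ ≤ ε ∧
        Y ω * ∑ i, w i * xt i ≤ 0} ⊆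
      ((fun ω => (Y ω, G ω)) ⁻¹' S) ∪ ((fun ω => (Y ω, G ω)) ⁻¹' T) := by
    intro ω hω
    by_cases hY : Y ω = 1 ∨ Y ω = -1
    · left
      obtain ⟨xt, ⟨δ, hxt⟩, hnorm, hle⟩ := hω
      set x : Fin d → ℝ := fun i => Y ω * θ i + σ * G ω i with hx
      set p : Fin d → ℝ := xt - x with hpdef
      have hp : p = U.mulVec (Uᵀ.mulVec δ) := by
        rw [hpdef, hxt]
        exact add_sub_cancel_left _ _
      have hbd := det_bound U hU w δ p hp ε hε hnorm
      have hY2 : Y ω * Y ω = 1 := by rcases hY with h | h <;> rw [h] <;> ring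
      have hxt_split : ∑ i, w i * xt i = (∑ i, w i * x i) + ∑ i, w i * p i := by
        rw [← Finset.sum_add_distrib]
        refine Finset.sum_congr rfl fun i _ => ?_
        have : xt i = x i + p i := by simp [hpdef]
        rw [this]; ring
      have hYx : Y ω * ∑ i, w i * x i = mar + σ * (Y ω * ∑ i, w i * G ω i) := by
        rw [Finset.mul_sum, hmar, Finset.mul_sum, Finset.mul_sum, ← Finset.sum_add_distrib]
        refine Finset.sum_congr rfl fun i _ => ?_
        have : Y ω * (w i * x i) = w i * θ i * (Y ω * Y ω) + σ * (Y ω * (w i * G ω i)) := by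
          rw [hx]; ring
        rw [this, hY2]; ring
      have hle2 : mar + σ * (Y ω * ∑ i, w i * G ω i) + Y ω * ∑ i, w i * p i ≤ 0 := by
        have := hle
        rw [hxt_split, mul_add, hYx] at this
        linarith
      have habs : -M ≤ Y ω * ∑ i, w i * p i := by
        have h1 : |Y ω * ∑ i, w i * p i| = |∑ i, w i * p i| := by
          rw [abs_mul]
          rcases hY with h | h <;> rw [h] <;> simp
        have h2 : |Y ω * ∑ i, w i * p i| ≤ M := h1 ▸ hbd
        linarith [neg_abs_le (Y ω * ∑ i, w i * p i), abs_nonneg (Y ω * ∑ i, w i * p i)]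
      have hfin : σ * (Y ω * ∑ i, w i * G ω i) ≤ M - mar := by linarith
      show Y ω * ∑ i, w i * G ω i ≤ -t
      rw [htdef, neg_div', neg_sub]
      rw [le_div_iff₀ hσ]
      linarith [hfin]
    · right
      show (Y ω, G ω) ∈ T
      simp only [hTdef, Set.mem_preimage, Set.mem_compl_iff, Set.mem_insert_iff,
        Set.mem_singleton_iff]
      exact hY
  -- probability of T-part is zero
  have hT0 : P ((fun ω => (Y ω, G ω)) ⁻¹' T) = 0 := by
    rw [← Measure.map_apply_of_aemeasurable hmp hTmeas, hlaw, hprod_apply T hTmeas]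
    have h1 : Prod.mk (1:ℝ) ⁻¹' T = ∅ := by
      ext g; simp [hTdef]
    have h2 : Prod.mk (-1:ℝ) ⁻¹' T = ∅ := by
      ext g; simp [hTdef]
    rw [h1, h2]
    simp
  -- probability of S-part
  have hS : P ((fun ω => (Y ω, G ω)) ⁻¹' S) =
      1/2 * νG (Prod.mk (1:ℝ) ⁻¹' S) + 1/2 * νG (Prod.mk (-1:ℝ) ⁻¹' S) := by
    rw [← Measure.map_apply_of_aemeasurable hmp hSmeas, hlaw, hprod_apply S hSmeas]
  -- identify the two sections
  have hsec1 : Prod.mk (1:ℝ) ⁻¹' S = {g : Fin d → ℝ | t ≤ ∑ i, (fun i => -w i) i * g i} := by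
    ext g
    simp only [hSdef, Set.mem_preimage, Set.mem_setOf_eq, one_mul]
    constructor
    · intro h
      have : ∑ i, (fun i => -w i) i * g i = -∑ i, w i * g i := by
        rw [← Finset.sum_neg_distrib]
        exact Finset.sum_congr rfl fun i _ => by ring
      rw [this]
      linarith
    · intro h
      have : ∑ i, (fun i => -w i) i * g i = -∑ i, w i * g i := by
        rw [← Finset.sum_neg_distrib]
        exact Finset.sum_congr rfl fun i _ => by ring
      rw [this] at h
      linarith
  have hsec2 : Prod.mk (-1:ℝ) ⁻¹' S = {g : Fin d → ℝ | t ≤ ∑ i, w i * g i} := by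
    ext g
    simp only [hSdef, Set.mem_preimage, Set.mem_setOf_eq, neg_mul, one_mul]
    constructor <;> intro h <;> linarith
  -- Gaussian tail bounds
  have htail1 : (νG (Prod.mk (1:ℝ) ⁻¹' S)).toReal ≤ rexp (-t ^ 2 / 2) := by
    rw [hsec1, hνG]
    refine gauss_tail (fun i => -w i) ?_ ht
    rw [← hw]
    exact Finset.sum_congr rfl fun i _ => by ring
  have htail2 : (νG (Prod.mk (-1:ℝ) ⁻¹' S)).toReal ≤ rexp (-t ^ 2 / 2) := by
    rw [hsec2, hνG]
    exact gauss_tail w hw ht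
  -- combine
  have hPle : P {ω | ∃ xt : Fin d → ℝ,
        (∃ δ : Fin d → ℝ,
          xt = (fun i => Y ω * θ i + σ * G ω i) + U.mulVec (Uᵀ.mulVec δ)) ∧
        ‖xt - (fun i => Y ω * θ i + σ * G ω i)‖ ≤ ε ∧
        Y ω * ∑ i, w i * xt i ≤ 0} ≤
      1/2 * νG (Prod.mk (1:ℝ) ⁻¹' S) + 1/2 * νG (Prod.mk (-1:ℝ) ⁻¹' S) := by
    refine le_trans (measure_mono hincl) ?_
    refine le_trans (measure_union_le _ _) ?_
    rw [hT0, add_zero, hS]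
  have hfin1 : νG (Prod.mk (1:ℝ) ⁻¹' S) ≠ ⊤ := measure_ne_top _ _
  have hfin2 : νG (Prod.mk (-1:ℝ) ⁻¹' S) ≠ ⊤ := measure_ne_top _ _
  have hRHSfin : (1/2 : ℝ≥0∞) * νG (Prod.mk (1:ℝ) ⁻¹' S) +
      1/2 * νG (Prod.mk (-1:ℝ) ⁻¹' S) ≠ ⊤ := by
    refine ENNReal.add_ne_top.mpr ⟨?_, ?_⟩ <;>
      exact ENNReal.mul_ne_top (by simp) (measure_ne_top _ _)
  have hstep : (P {ω | ∃ xt : Fin d → ℝ,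
        (∃ δ : Fin d → ℝ,
          xt = (fun i => Y ω * θ i + σ * G ω i) + U.mulVec (Uᵀ.mulVec δ)) ∧
        ‖xt - (fun i => Y ω * θ i + σ * G ω i)‖ ≤ ε ∧
        Y ω * ∑ i, w i * xt i ≤ 0}).toReal ≤
      1/2 * (νG (Prod.mk (1:ℝ) ⁻¹' S)).toReal + 1/2 * (νG (Prod.mk (-1:ℝ) ⁻¹' S)).toReal := by
    refine le_trans (ENNReal.toReal_mono hRHSfin hPle) ?_
    rw [ENNReal.toReal_add (ENNReal.mul_ne_top (by simp) hfin1)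
      (ENNReal.mul_ne_top (by simp) hfin2), ENNReal.toReal_mul, ENNReal.toReal_mul]
    simp [ENNReal.toReal_div]
  refine le_trans hstep ?_
  have hexp_eq : rexp (-t ^ 2 / 2) = rexp (-(mar - M) ^ 2 / (2 * σ ^ 2)) := by
    congr 1
    rw [htdef]
    field_simp
  calc 1/2 * (νG (Prod.mk (1:ℝ) ⁻¹' S)).toReal + 1/2 * (νG (Prod.mk (-1:ℝ) ⁻¹' S)).toReal
      ≤ 1/2 * rexp (-t ^ 2 / 2) + 1/2 * rexp (-t ^ 2 / 2) := by
        gcongr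
    _ = rexp (-t ^ 2 / 2) := by ring
    _ = rexp (-(mar - M) ^ 2 / (2 * σ ^ 2)) := hexp_eq
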